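/- Let m be a positive integer and J, J′, K, K′ ⊆ {0,1,…,m−1} with |J| = |J′| = |K| = |K′|, and suppose H_{J,K,m} is a Hadamard submatrix of the Fourier matrix F_m. If P_m(J′) = P_m(J) and P_m(K′) = P_m(K), then H_{J′,K′,m} is also a Hadamard submatrix of F_m. Alternatively, if P_m(J′) = P_m(K) and P_m(K′) = P_m(J), then H_{J′,K′,m} is also a Hadamard submatrix of F_m. -/

import Mathlib

open Finset

/-- The difference set `D(X) = {x₁ - x₂ : x₁, x₂ ∈ X}` of a finite set of naturals. -/
def diffSet (X : Finset ℕ) : Finset ℤ :=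
  (X ×ˢ X).image fun q => (q.1 : ℤ) - (q.2 : ℤ)

/-- The `m`-th primitive set `P_m(X) = {m / gcd(m,d) : d ∈ D(X)}`. -/
def primSet (m : ℕ) (X : Finset ℕ) : Finset ℕ :=
  (diffSet X).image fun d => m / Nat.gcd m d.natAbs

/-- `H_{J,K,m}` is a Hadamard submatrix of the Fourier matrix `F_m`:
for all distinct `j₁ j₂ ∈ J`, `∑_{k ∈ K} e^{2πi(j₁-j₂)k/m} = 0`. -/
def IsHadamardSub (m : ℕ) (J K : Finset ℕ) : Prop :=
  ∀ j₁ ∈ J, ∀ j₂ ∈ J, j₁ ≠ j₂ →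
    ∑ k ∈ K, Complex.exp (2 * Real.pi * Complex.I * ((j₁ : ℂ) - (j₂ : ℂ)) * (k : ℂ) / (m : ℂ)) = 0

/-- `ν_p^max` of a finite set of naturals. -/
noncomputable def nuMaxN (p : ℕ) (S : Finset ℕ) : ℕ := S.sup fun n => padicValNat p n

/-- `ν_p^min` of a finite set of naturals (0 for the empty set). -/
noncomputable def nuMinN (p : ℕ) (S : Finset ℕ) : ℕ :=
  if h : S.Nonempty then S.inf' h fun n => padicValNat p n else 0

/-- `ν_p^max` of a finite set of integers. -/
noncomputable def nuMaxI (p : ℕ) (S : Finset ℤ) : ℕ := S.sup fun d => padicValInt p d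

/-- `ν_p^min` of a finite set of integers (0 for the empty set). -/
noncomputable def nuMinI (p : ℕ) (S : Finset ℤ) : ℕ :=
  if h : S.Nonempty then S.inf' h fun d => padicValInt p d else 0

/-- `C_m(X) = ∏_{s ∈ P_m(X) \ {1}} Φ_s(1)`. -/
noncomputable def Cm (m : ℕ) (X : Finset ℕ) : ℤ :=
  ∏ s ∈ (primSet m X).erase 1, (Polynomial.cyclotomic s ℤ).eval 1

noncomputable def fpoly (Y : Finset ℕ) : Polynomial ℚ := ∑ k ∈ Y, Polynomial.X ^ k

lemma sum_pow_eq_zero_iff {s : ℕ} (hs : 0 < s) {μ : ℂ} (hμ : IsPrimitiveRoot μ s)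
    (Y : Finset ℕ) : (∑ k ∈ Y, μ ^ k = 0) ↔ Polynomial.cyclotomic s ℚ ∣ fpoly Y := by
  have hev : Polynomial.aeval μ (fpoly Y) = ∑ k ∈ Y, μ ^ k := by
    simp [fpoly]
  rw [Polynomial.cyclotomic_eq_minpoly_rat hμ hs]
  constructor
  · intro h
    exact minpoly.dvd ℚ μ (by rw [hev]; exact h)
  · rintro ⟨q, hq⟩
    rw [← hev, hq, map_mul, minpoly.aeval, zero_mul]

lemma isPrimitiveRoot_exp_int (m : ℕ) (hm : 0 < m) (d : ℤ) :
    IsPrimitiveRoot (Complex.exp (2 * Real.pi * Complex.I * (d:ℂ) / (m:ℂ)))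
      (m / Nat.gcd m d.natAbs) := by
  have hmZ : (m:ℤ) ≠ 0 := by exact_mod_cast hm.ne'
  have hmC : (m:ℂ) ≠ 0 := by exact_mod_cast hm.ne'
  set d' : ℕ := (d % m).toNat with hd'def
  have hmod : ((d' : ℤ)) = d % m := Int.toNat_of_nonneg (Int.emod_nonneg d hmZ)
  -- gcd equality
  have hgcd : Nat.gcd m d.natAbs = Nat.gcd m d' := by
    apply Nat.dvd_antisymm
    · apply Nat.dvd_gcd (Nat.gcd_dvd_left _ _)
      have h1 : ((Nat.gcd m d.natAbs : ℤ)) ∣ d := by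
        rw [Int.natCast_dvd]
        exact Nat.gcd_dvd_right _ _
      have h2 : ((Nat.gcd m d.natAbs : ℤ)) ∣ (m:ℤ) := by
        exact_mod_cast Nat.gcd_dvd_left m d.natAbs
      have h3 : ((Nat.gcd m d.natAbs : ℤ)) ∣ (d' : ℤ) := by
        rw [hmod, Int.emod_def]
        exact dvd_sub h1 (h2.mul_right _)
      exact_mod_cast h3
    · apply Nat.dvd_gcd (Nat.gcd_dvd_left _ _)
      have h1 : ((Nat.gcd m d' : ℤ)) ∣ (d' : ℤ) := by exact_mod_cast Nat.gcd_dvd_right m d'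
      have h2 : ((Nat.gcd m d' : ℤ)) ∣ (m:ℤ) := by exact_mod_cast Nat.gcd_dvd_left m d'
      have h3 : ((Nat.gcd m d' : ℤ)) ∣ d := by
        have := Int.emod_add_mul_ediv d m
        rw [← this, ← hmod]
        exact dvd_add h1 (h2.mul_right _)
      rw [Int.natCast_dvd] at h3
      exact h3
  -- exp equality
  have hexp : Complex.exp (2 * Real.pi * Complex.I * (d:ℂ) / (m:ℂ))
      = Complex.exp (2 * Real.pi * Complex.I / (m:ℂ)) ^ d' := by
    have hdc : (d:ℂ) = (d':ℂ) + (m:ℂ) * ((d / m : ℤ) : ℂ) := by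
      have h := Int.emod_add_mul_ediv d m
      have : ((d % m + m * (d / m) : ℤ) : ℂ) = ((d : ℤ) : ℂ) := by rw [h]
      push_cast at this
      rw [← this, ← hmod]
      push_cast
      ring
    rw [← Complex.exp_nat_mul]
    have harg : 2 * Real.pi * Complex.I * (d:ℂ) / (m:ℂ)
        = (d':ℂ) * (2 * Real.pi * Complex.I / (m:ℂ)) + ((d / m : ℤ) : ℂ) * (2 * Real.pi * Complex.I) := by
      rw [hdc]; field_simp
    rw [harg, Complex.exp_add, Complex.exp_int_mul_two_pi_mul_I, mul_one, mul_comm]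
  rw [hexp, hgcd]
  -- primitive root of ζ^d'
  set g := Nat.gcd m d' with hg
  have hgpos : 0 < g := Nat.gcd_pos_of_pos_left _ hm
  have hgm : g ∣ m := Nat.gcd_dvd_left _ _
  have hgd : g ∣ d' := Nat.gcd_dvd_right _ _
  have hζ := Complex.isPrimitiveRoot_exp m hm.ne'
  have h1 : IsPrimitiveRoot (Complex.exp (2 * Real.pi * Complex.I / (m:ℂ)) ^ g) (m / g) :=
    hζ.pow hm (Nat.mul_div_cancel' hgm).symm
  have hcop : (d' / g).Coprime (m / g) := by
    have := Nat.coprime_div_gcd_div_gcd (m := d') (n := m) (by rwa [Nat.gcd_comm] : 0 < Nat.gcd d' m)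
    rwa [Nat.gcd_comm] at this
  have h2 := h1.pow_of_coprime (d' / g) hcop
  rwa [← pow_mul, Nat.mul_div_cancel' hgd] at h2

lemma sum_eq_sum_pow (m : ℕ) (hm : 0 < m) (K : Finset ℕ) (j₁ j₂ : ℕ) :
    ∑ k ∈ K, Complex.exp (2 * Real.pi * Complex.I * ((j₁ : ℂ) - (j₂ : ℂ)) * (k : ℂ) / (m : ℂ))
      = ∑ k ∈ K, (Complex.exp (2 * Real.pi * Complex.I * (((j₁:ℤ) - (j₂:ℤ) : ℤ):ℂ) / (m:ℂ))) ^ k := by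
  refine Finset.sum_congr rfl fun k _ => ?_
  rw [← Complex.exp_nat_mul]
  congr 1
  have hmC : (m:ℂ) ≠ 0 := by exact_mod_cast hm.ne'
  push_cast
  field_simp

lemma hadamard_iff (m : ℕ) (hm : 0 < m) (J K : Finset ℕ) (hJ : J ⊆ Finset.range m) :
    IsHadamardSub m J K ↔
      ∀ s ∈ (primSet m J).erase 1, Polynomial.cyclotomic s ℚ ∣ fpoly K := by
  constructor
  · intro hH s hs
    rw [Finset.mem_erase] at hs
    obtain ⟨hs1, hsmem⟩ := hs
    rw [primSet, Finset.mem_image] at hsmem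
    obtain ⟨d, hdmem, hds⟩ := hsmem
    rw [diffSet, Finset.mem_image] at hdmem
    obtain ⟨q, hq, hqd⟩ := hdmem
    rw [Finset.mem_product] at hq
    -- s ≠ 1 forces ¬ m ∣ d, hence q.1 ≠ q.2
    have hnd : ¬ ((m:ℤ) ∣ d) := by
      intro hdvd
      apply hs1
      have : m ∣ d.natAbs := Int.natCast_dvd.mp hdvd
      rw [← hds, Nat.gcd_eq_left this, Nat.div_self hm]
    have hne : q.1 ≠ q.2 := by
      rintro h
      exact hnd (by rw [← hqd, h, sub_self]; exact dvd_zero _)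
    have hsum := hH q.1 hq.1 q.2 hq.2 hne
    rw [sum_eq_sum_pow m hm K q.1 q.2] at hsum
    have hprim := isPrimitiveRoot_exp_int m hm d
    rw [hds] at hprim
    have hspos : 0 < s := by
      rw [← hds]
      exact Nat.div_pos (Nat.le_of_dvd hm (Nat.gcd_dvd_left _ _))
        (Nat.gcd_pos_of_pos_left _ hm)
    rw [hqd] at hsum
    exact (sum_pow_eq_zero_iff hspos hprim K).mp hsum
  · intro hdvd j₁ hj₁ j₂ hj₂ hne
    set d : ℤ := (j₁ : ℤ) - (j₂ : ℤ) with hd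
    have hdmem : d ∈ diffSet J := by
      rw [diffSet, Finset.mem_image]
      exact ⟨(j₁, j₂), Finset.mem_product.mpr ⟨hj₁, hj₂⟩, rfl⟩
    set s : ℕ := m / Nat.gcd m d.natAbs with hs
    have hsmem : s ∈ primSet m J := by
      rw [primSet, Finset.mem_image]
      exact ⟨d, hdmem, rfl⟩
    have hnd : ¬ ((m:ℤ) ∣ d) := by
      intro hdd
      have hj₁m := Finset.mem_range.mp (hJ hj₁)
      have hj₂m := Finset.mem_range.mp (hJ hj₂)
      have hd0 : d = 0 := by
        refine Int.eq_zero_of_abs_lt_dvd hdd ?_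
        rw [hd, abs_sub_lt_iff]
        constructor <;> push_cast <;> omega
      rw [hd, sub_eq_zero] at hd0
      exact hne (by exact_mod_cast hd0)
    have hs1 : s ≠ 1 := by
      intro h1
      apply hnd
      have hgdvd : Nat.gcd m d.natAbs ∣ m := Nat.gcd_dvd_left _ _
      have : m = Nat.gcd m d.natAbs := by
        conv_lhs => rw [← Nat.mul_div_cancel' hgdvd]
        rw [← hs, h1, mul_one]
      rw [Int.natCast_dvd, this]
      exact Nat.gcd_dvd_right _ _
    have hspos : 0 < s :=
      Nat.div_pos (Nat.le_of_dvd hm (Nat.gcd_dvd_left _ _)) (Nat.gcd_pos_of_pos_left _ hm)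
    have hprim := isPrimitiveRoot_exp_int m hm d
    rw [sum_eq_sum_pow m hm K j₁ j₂]
    exact (sum_pow_eq_zero_iff hspos hprim K).mpr
      (hdvd s (Finset.mem_erase.mpr ⟨hs1, hsmem⟩))

lemma hadamard_symm (m : ℕ) (X Y : Finset ℕ) (hcard : X.card = Y.card)
    (h : IsHadamardSub m X Y) : IsHadamardSub m Y X := by
  classical
  rcases X.eq_empty_or_nonempty with rfl | hXne
  · have hY : Y = ∅ := Finset.card_eq_zero.mp (by simpa using hcard.symm)
    subst hY
    intro k₁ hk₁
    simp at hk₁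
  have hn : (X.card : ℂ) ≠ 0 := by
    exact_mod_cast (Finset.card_pos.mpr hXne).ne'
  set E : ℕ → ℕ → ℂ := fun j k => Complex.exp (2 * Real.pi * Complex.I * (j:ℂ) * (k:ℂ) / (m:ℂ))
    with hE
  have hconj : ∀ j k : ℕ, (starRingEnd ℂ) (E j k)
      = Complex.exp (-(2 * Real.pi * Complex.I * (j:ℂ) * (k:ℂ) / (m:ℂ))) := by
    intro j k
    rw [hE, ← Complex.exp_conj]
    congr 1
    simp [map_div₀, Complex.conj_I]
    ring_nf
    simp [map_ofNat]
    ring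
  have key : ∀ j₁ j₂ k : ℕ, E j₁ k * (starRingEnd ℂ) (E j₂ k)
      = Complex.exp (2 * Real.pi * Complex.I * ((j₁:ℂ) - (j₂:ℂ)) * (k:ℂ) / (m:ℂ)) := by
    intro j₁ j₂ k
    rw [hconj, hE, ← Complex.exp_add]
    congr 1
    ring
  have key2 : ∀ k₁ k₂ j : ℕ, (starRingEnd ℂ) (E j k₂) * E j k₁
      = Complex.exp (2 * Real.pi * Complex.I * ((k₁:ℂ) - (k₂:ℂ)) * (j:ℂ) / (m:ℂ)) := by
    intro k₁ k₂ j
    rw [hconj, hE, ← Complex.exp_add]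
    congr 1
    ring
  have e : {x // x ∈ X} ≃ {y // y ∈ Y} :=
    Fintype.equivOfCardEq (by simp [Fintype.card_coe, hcard])
  set M : Matrix {x // x ∈ X} {x // x ∈ X} ℂ := fun j a => E j.val (e a).val with hM
  have claim1 : M * M.conjTranspose = (X.card : ℂ) • 1 := by
    ext j₁ j₂
    rw [Matrix.mul_apply]
    simp only [Matrix.conjTranspose_apply, Complex.star_def]
    simp only [hM]
    have hre : ∑ a : {x // x ∈ X}, E j₁.val (e a).val * (starRingEnd ℂ) (E j₂.val (e a).val)
        = ∑ k ∈ Y, E j₁.val k * (starRingEnd ℂ) (E j₂.val k) := by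
      rw [← Finset.sum_coe_sort Y (fun k => E j₁.val k * (starRingEnd ℂ) (E j₂.val k))]
      exact Equiv.sum_comp e (fun b => E j₁.val b.val * (starRingEnd ℂ) (E j₂.val b.val))
    rw [hre]
    by_cases hj : j₁ = j₂
    · subst hj
      have : ∀ k ∈ Y, E j₁.val k * (starRingEnd ℂ) (E j₁.val k) = 1 := by
        intro k _
        rw [key]
        simp
      rw [Finset.sum_congr rfl this, Finset.sum_const, nsmul_eq_mul, mul_one]
      simp [Matrix.smul_apply, Matrix.one_apply, hcard]
    · have hvne : (j₁ : ℕ) ≠ (j₂ : ℕ) := fun hv => hj (Subtype.ext hv)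
      have := h j₁.val j₁.2 j₂.val j₂.2 hvne
      rw [Finset.sum_congr rfl (fun k _ => key j₁.val j₂.val k), this]
      simp [Matrix.smul_apply, Matrix.one_apply_ne hj]
  have claim2 : M.conjTranspose * M = (X.card : ℂ) • 1 := by
    have h1 : M * ((X.card : ℂ)⁻¹ • M.conjTranspose) = 1 := by
      rw [Matrix.mul_smul, claim1, smul_smul, inv_mul_cancel₀ hn, one_smul]
    have h2 := mul_eq_one_comm.mp h1
    calc M.conjTranspose * M
        = (X.card : ℂ) • (((X.card : ℂ)⁻¹ • M.conjTranspose) * M) := by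
          rw [Matrix.smul_mul, smul_smul, mul_inv_cancel₀ hn, one_smul]
      _ = (X.card : ℂ) • 1 := by rw [h2]
  intro k₁ hk₁ k₂ hk₂ hne
  set a₁ := e.symm ⟨k₂, hk₂⟩ with ha₁
  set a₂ := e.symm ⟨k₁, hk₁⟩ with ha₂
  have hane : a₁ ≠ a₂ := by
    intro hh
    apply hne
    have := congrArg (fun a => ((e a : {y // y ∈ Y}) : ℕ)) hh
    simp [ha₁, ha₂] at this
    exact this.symm
  have hentry := congrFun (congrFun claim2 a₁) a₂
  rw [Matrix.mul_apply] at hentry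
  simp only [Matrix.conjTranspose_apply, Complex.star_def] at hentry
  simp only [hM] at hentry
  have hval₁ : ((e a₁ : {y // y ∈ Y}) : ℕ) = k₂ := by simp [ha₁]
  have hval₂ : ((e a₂ : {y // y ∈ Y}) : ℕ) = k₁ := by simp [ha₂]
  rw [hval₁, hval₂] at hentry  -- may fail; handled below
  have hzero : ((X.card : ℂ) • (1 : Matrix {x // x ∈ X} {x // x ∈ X} ℂ)) a₁ a₂ = 0 := by
    simp [Matrix.smul_apply, Matrix.one_apply_ne hane]
  rw [hzero] at hentry
  have hre : ∑ j : {x // x ∈ X}, (starRingEnd ℂ) (E j.val k₂) * E j.val k₁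
      = ∑ j ∈ X, (starRingEnd ℂ) (E j k₂) * E j k₁ :=
    Finset.sum_coe_sort X (fun j => (starRingEnd ℂ) (E j k₂) * E j k₁)
  rw [hre] at hentry
  rw [← Finset.sum_congr rfl (fun j _ => key2 k₁ k₂ j)]
  exact hentry

theorem hadamard_of_primSets_eq (m : ℕ) (hm : 0 < m) (J J' K K' : Finset ℕ)
    (hJ : J ⊆ Finset.range m) (hJ' : J' ⊆ Finset.range m)
    (hK : K ⊆ Finset.range m) (hK' : K' ⊆ Finset.range m)
    (h1 : J'.card = J.card) (h2 : K.card = J.card) (h3 : K'.card = J.card)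
    (hH : IsHadamardSub m J K) :
    ((primSet m J' = primSet m J ∧ primSet m K' = primSet m K) → IsHadamardSub m J' K') ∧
    ((primSet m J' = primSet m K ∧ primSet m K' = primSet m J) → IsHadamardSub m J' K') := by
  constructor
  · rintro ⟨hJJ, hKK⟩
    have s1 : IsHadamardSub m K J := hadamard_symm m J K h2.symm hH
    have s2 : IsHadamardSub m K' J := by
      rw [hadamard_iff m hm K' J hK', hKK]
      rw [hadamard_iff m hm K J hK] at s1
      exact s1
    have s3 : IsHadamardSub m J K' := hadamard_symm m K' J h3 s2
    rw [hadamard_iff m hm J K' hJ] at s3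
    rw [hadamard_iff m hm J' K' hJ', hJJ]
    exact s3
  · rintro ⟨hJK, hKJ⟩
    have s1 : IsHadamardSub m K' K := by
      rw [hadamard_iff m hm K' K hK', hKJ]
      rw [hadamard_iff m hm J K hJ] at hH
      exact hH
    have s2 : IsHadamardSub m K K' := hadamard_symm m K' K (h3.trans h2.symm) s1
    rw [hadamard_iff m hm K K' hK] at s2
    rw [hadamard_iff m hm J' K' hJ', hJK]
    exact s2
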